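/- Define f : ℝ → ℝ by f(v) := sech(v) · tanh(v). Then f(0) = 0 and f(v)² + sech(v) · f'(v) − sech⁴(v) = 0 for all v ∈ ℝ; likewise g := −f satisfies g(0) = 0 and g(v)² − sech(v) · g'(v) − sech⁴(v) = 0. -/

import Mathlib

/-!
STATEMENT 17: f(v) = sech v · tanh v satisfies f(0) = 0 and
f² + sech v · f' − sech⁴ v = 0; g = −f satisfies g(0) = 0 and
g² − sech v · g' − sech⁴ v = 0 (the Riccati equation for the quasi-uniformity
character on the unit catenoid, K = −sech⁴ v).
-/

lemma catenoid_aux_hasDerivAt (v : ℝ) :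
    HasDerivAt (fun v => Real.sinh v / Real.cosh v ^ 2)
      ((Real.cosh v * Real.cosh v ^ 2 -
        Real.sinh v * (2 * Real.cosh v ^ 1 * Real.sinh v)) / (Real.cosh v ^ 2) ^ 2) v := by
  exact (Real.hasDerivAt_sinh v).div ((Real.hasDerivAt_cosh v).pow 2)
    (pow_ne_zero 2 (Real.cosh_pos v).ne')

theorem catenoid_character_riccati
    (f g : ℝ → ℝ)
    (hf : ∀ v, f v = (Real.cosh v)⁻¹ * Real.tanh v)
    (hg : ∀ v, g v = -f v) :
    f 0 = 0 ∧
    (∀ v : ℝ, (f v) ^ 2 + (Real.cosh v)⁻¹ * deriv f v - ((Real.cosh v)⁻¹) ^ 4 = 0) ∧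
    g 0 = 0 ∧
    (∀ v : ℝ, (g v) ^ 2 - (Real.cosh v)⁻¹ * deriv g v - ((Real.cosh v)⁻¹) ^ 4 = 0) := by
  have hfe : f = fun v => Real.sinh v / Real.cosh v ^ 2 := by
    funext v
    have hc := (Real.cosh_pos v).ne'
    rw [hf v, Real.tanh_eq_sinh_div_cosh, sq]
    field_simp
  have hge : g = fun v => -(Real.sinh v / Real.cosh v ^ 2) := by
    funext v; rw [hg v, hfe]
  have hderivf : ∀ v, deriv f v =
      (Real.cosh v * Real.cosh v ^ 2 -
        Real.sinh v * (2 * Real.cosh v ^ 1 * Real.sinh v)) / (Real.cosh v ^ 2) ^ 2 := by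
    intro v
    rw [hfe]
    exact (catenoid_aux_hasDerivAt v).deriv
  have hderivg : ∀ v, deriv g v =
      -((Real.cosh v * Real.cosh v ^ 2 -
        Real.sinh v * (2 * Real.cosh v ^ 1 * Real.sinh v)) / (Real.cosh v ^ 2) ^ 2) := by
    intro v
    rw [hge]
    exact ((catenoid_aux_hasDerivAt v).neg).deriv
  have key : ∀ v : ℝ, Real.cosh v ^ 2 - Real.sinh v ^ 2 = 1 := fun v => Real.cosh_sq_sub_sinh_sq v
  refine ⟨by simp [hf], ?_, by simp [hg, hf], ?_⟩
  · intro v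
    have hc := (Real.cosh_pos v).ne'
    rw [hderivf v, hfe]
    field_simp
    linear_combination key v
  · intro v
    have hc := (Real.cosh_pos v).ne'
    rw [hderivg v, hge]
    field_simp
    linear_combination key v
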